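/- Let k ≥ 1 be an integer and let a, b be reals with 0 < a < 1 < b. Then the polynomial g(x) = b·x^(k+1) − x^k + x − a has exactly one root in the open interval (0,1). -/

import Mathlib

lemma aux_pow_ineq (m : ℕ) : ∀ x : ℝ, 0 ≤ x → x ≤ 1 →
    ((m : ℝ) + 1) * x ^ m ≤ (m : ℝ) * x ^ (m + 1) + 1 := by
  induction m with
  | zero => intro x hx0 hx1; simp
  | succ n ih =>
    intro x hx0 hx1
    have h := ih x hx0 hx1
    have h' := mul_le_mul_of_nonneg_right h hx0
    have h1 : x ^ (n + 1) ≤ 1 := pow_le_one₀ hx0 hx1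
    have h2 : (0:ℝ) ≤ (1 - x) * (1 - x ^ (n + 1)) :=
      mul_nonneg (by linarith) (by linarith)
    have e1 : x ^ (n + 1) = x ^ n * x := pow_succ x n
    have e2 : x ^ (n + 1 + 1) = x ^ n * x * x := by rw [pow_succ, e1]
    rw [e1] at h h' h2
    push_cast
    rw [e1, e2]
    nlinarith [pow_nonneg hx0 n, h', h2]

/-- The polynomial `g(x) = b·x^(k+1) − x^k + x − a` with `0 < a < 1 < b` has
exactly one root in the open interval `(0,1)`. -/
theorem unique_root_in_Ioo (k : ℕ) (hk : 1 ≤ k) (a b : ℝ)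
    (ha0 : 0 < a) (ha1 : a < 1) (hb : 1 < b) :
    ∃! x : ℝ, x ∈ Set.Ioo (0 : ℝ) 1 ∧
      b * x ^ (k + 1) - x ^ k + x - a = 0 := by
  obtain ⟨m, rfl⟩ : ∃ m, k = m + 1 := ⟨k - 1, (Nat.succ_pred_eq_of_pos hk).symm⟩
  set f : ℝ → ℝ := fun x => b * x ^ (m + 1 + 1) - x ^ (m + 1) + x - a with hf
  have hcont : ContinuousOn f (Set.Icc 0 1) := by
    apply Continuous.continuousOn; fun_prop
  have hderiv : ∀ x : ℝ,
      HasDerivAt f (b * ((m + 2) * x ^ (m + 1)) - (m + 1) * x ^ m + 1) x := by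
    intro x
    have h1 := (hasDerivAt_pow (m + 1 + 1) x).const_mul b
    have h2 := hasDerivAt_pow (m + 1) x
    have h3 := ((h1.sub h2).add (hasDerivAt_id x)).sub_const a
    refine h3.congr_deriv ?_
    simp only [Nat.add_sub_cancel]
    push_cast
    ring
  have hmono : StrictMonoOn f (Set.Icc 0 1) := by
    apply strictMonoOn_of_deriv_pos (convex_Icc 0 1) hcont
    intro x hx
    rw [interior_Icc] at hx
    obtain ⟨hx0, hx1⟩ := hx
    rw [(hderiv x).deriv]
    have key := aux_pow_ineq m x hx0.le hx1.le
    have hxp : 0 < x ^ (m + 1) := pow_pos hx0 (m + 1)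
    nlinarith [mul_pos (sub_pos.mpr hb) hxp, pow_nonneg hx0.le m]
  have hf0 : f 0 = -a := by simp [hf]
  have hf1 : f 1 = b - a := by simp [hf]
  have hmem : (0:ℝ) ∈ Set.Ioo (f 0) (f 1) := by
    rw [hf0, hf1]; constructor <;> nlinarith
  obtain ⟨x, hx, hfx⟩ := intermediate_value_Ioo (zero_le_one) hcont hmem
  refine ⟨x, ⟨hx, hfx⟩, ?_⟩
  rintro y ⟨hy, hfy⟩
  exact hmono.injOn (Set.Ioo_subset_Icc_self hy) (Set.Ioo_subset_Icc_self hx)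
    (show f y = f x by rw [hfx]; exact hfy)
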